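/- Let F : R^D → R be continuously differentiable with L-Lipschitz gradient and μ-strongly convex with minimizer w*. Suppose w^{t+1} = w^t - (1/L)(∇F(w^t) - e^t) where the error satisfies E‖e^t‖² ≤ 2β₁ d + 4μβ₂ d (E F(w^t) - F(w*)) for nonnegative constants β₁, β₂, d. Then E[F(w^{t+1}) - F(w*)] ≤ (1 - μ/L) E[F(w^t) - F(w*)] + ((2μβ₂/L) E[F(w^t) - F(w*)] + β₁/L) · 2d. -/

import Mathlib

open MeasureTheory

open InnerProductSpace in
private lemma descent_aux {D : ℕ} (F : EuclideanSpace ℝ (Fin D) → ℝ) (L : ℝ)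
    (hdiff : ContDiff ℝ 1 F)
    (hLip : ∀ x y, ‖gradient F x - gradient F y‖ ≤ L * ‖x - y‖)
    (x v : EuclideanSpace ℝ (Fin D)) :
    F (x + v) ≤ F x + inner ℝ (gradient F x) v + L / 2 * ‖v‖ ^ 2 := by
  have hdFA : ∀ p, DifferentiableAt ℝ F p := fun p => (hdiff.differentiable one_ne_zero) p
  have hφ : ∀ t : ℝ, HasDerivAt (fun t : ℝ => F (x + t • v))
      (inner (𝕜 := ℝ) (gradient F (x + t • v)) v) t := by
    intro t
    have hline : HasDerivAt (fun t : ℝ => x + t • v) v t := by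
      simpa using ((hasDerivAt_id t).smul_const v).const_add x
    have hF := (hdFA (x + t • v)).hasGradientAt.hasFDerivAt
    simpa [InnerProductSpace.toDual_apply_apply, Function.comp_def] using hF.comp_hasDerivAt t hline
  set g : ℝ → ℝ := fun t => F (x + t • v) - t * inner ℝ (gradient F x) v - L / 2 * t ^ 2 * ‖v‖ ^ 2
    with hg
  have hg' : ∀ t : ℝ, HasDerivAt g
      (inner (𝕜 := ℝ) (gradient F (x + t • v)) v - inner (𝕜 := ℝ) (gradient F x) v
        - L * t * ‖v‖ ^ 2) t := by
    intro t
    have h1 := (hφ t).sub (((hasDerivAt_id t).mul_const (inner (𝕜 := ℝ) (gradient F x) v)))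
    have h2 : HasDerivAt (fun t : ℝ => L / 2 * t ^ 2 * ‖v‖ ^ 2) (L * t * ‖v‖ ^ 2) t := by
      have := ((hasDerivAt_pow 2 t).const_mul (L / 2)).mul_const (‖v‖ ^ 2)
      exact this.congr_deriv (by rw [show (2:ℕ) - 1 = 1 from rfl, pow_one]; push_cast; ring)
    simpa [hg, Function.comp_def, Pi.sub_def] using h1.sub h2
  have hmono : g 1 ≤ g 0 := by
    have : AntitoneOn g (Set.Icc (0:ℝ) 1) := by
      apply AntitoneOn.mono (s := Set.Ici (0:ℝ)) ?_ (Set.Icc_subset_Ici_self)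
      apply antitoneOn_of_deriv_nonpos (convex_Ici 0)
        (fun t _ => (hg' t).differentiableAt.continuousAt.continuousWithinAt)
        (fun t _ => ((hg' t).differentiableAt.differentiableWithinAt))
      intro t ht
      rw [interior_Ici] at ht
      rw [(hg' t).deriv]
      have h3 : inner (𝕜 := ℝ) (gradient F (x + t • v)) v - inner (𝕜 := ℝ) (gradient F x) v
          ≤ L * t * ‖v‖ ^ 2 := by
        have h4 : inner (𝕜 := ℝ) (gradient F (x + t • v)) v - inner (𝕜 := ℝ) (gradient F x) v
            = inner (𝕜 := ℝ) (gradient F (x + t • v) - gradient F x) v := by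
          rw [inner_sub_left]
        rw [h4]
        calc inner (𝕜 := ℝ) (gradient F (x + t • v) - gradient F x) v
            ≤ ‖gradient F (x + t • v) - gradient F x‖ * ‖v‖ := real_inner_le_norm _ _
          _ ≤ (L * ‖x + t • v - x‖) * ‖v‖ := by
              gcongr; exact hLip _ _
          _ ≤ L * t * ‖v‖ ^ 2 := by
              have : ‖x + t • v - x‖ = |t| * ‖v‖ := by
                simp [norm_smul, Real.norm_eq_abs]
              rw [this, abs_of_pos ht.out]
              ring_nf
              exact le_rfl
      linarith
    exact this (by simp) (by simp) zero_le_one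
  have h1 := hmono
  simp only [hg, one_smul, zero_smul, add_zero, one_pow, mul_one, one_mul, mul_zero, zero_mul,
    sub_zero] at h1
  nlinarith [h1]

theorem stmt_6 (D : ℕ) {Ω : Type*} [MeasurableSpace Ω] (P : Measure Ω)
    [IsProbabilityMeasure P]
    (F : EuclideanSpace ℝ (Fin D) → ℝ) (L μ : ℝ) (hL : 0 < L) (hμ : 0 < μ)
    (hdiff : ContDiff ℝ 1 F)
    (hLip : ∀ x y, ‖gradient F x - gradient F y‖ ≤ L * ‖x - y‖)
    (hsc : ∀ x y, F y ≥ F x + inner ℝ (gradient F x) (y - x) + (μ / 2) * ‖y - x‖ ^ 2)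
    (wstar : EuclideanSpace ℝ (Fin D)) (hmin : ∀ w, F wstar ≤ F w)
    (β₁ β₂ d : ℝ) (hβ₁ : 0 ≤ β₁) (hβ₂ : 0 ≤ β₂) (hd : 0 ≤ d)
    (w w' e : Ω → EuclideanSpace ℝ (Fin D))
    (hupd : ∀ ω, w' ω = w ω - (1 / L) • (gradient F (w ω) - e ω))
    (hint_w : Integrable (fun ω => F (w ω)) P)
    (hint_w' : Integrable (fun ω => F (w' ω)) P)
    (hint_e : Integrable (fun ω => ‖e ω‖ ^ 2) P)
    (herr : ∫ ω, ‖e ω‖ ^ 2 ∂P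
      ≤ 2 * β₁ * d + 4 * μ * β₂ * d * (∫ ω, (F (w ω) - F wstar) ∂P)) :
    ∫ ω, (F (w' ω) - F wstar) ∂P
      ≤ (1 - μ / L) * (∫ ω, (F (w ω) - F wstar) ∂P)
        + ((2 * μ * β₂ / L) * (∫ ω, (F (w ω) - F wstar) ∂P) + β₁ / L) * (2 * d) := by
  -- pointwise bound
  have hpt : ∀ ω, F (w' ω) - F wstar
      ≤ (1 - μ / L) * (F (w ω) - F wstar) + 1 / (2 * L) * ‖e ω‖ ^ 2 := by
    intro ω
    set x := w ω with hx
    set gx := gradient F x with hgx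
    set v : EuclideanSpace ℝ (Fin D) := -((1 / L) • (gx - e ω)) with hv
    have hw' : w' ω = x + v := by rw [hupd ω, hv]; abel
    have hdesc := descent_aux F L hdiff hLip x v
    rw [← hw'] at hdesc
    -- PL inequality
    have hPL : 2 * μ * (F x - F wstar) ≤ ‖gx‖ ^ 2 := by
      have h := hsc x wstar
      have hip : inner (𝕜 := ℝ) gx (wstar - x) ≥ -(‖gx‖ * ‖wstar - x‖) := by
        have := real_inner_le_norm gx (x - wstar)
        have h2 : inner (𝕜 := ℝ) gx (x - wstar) = - inner (𝕜 := ℝ) gx (wstar - x) := by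
          rw [← inner_neg_right]; congr 1; abel
        rw [h2] at this
        have h3 : ‖x - wstar‖ = ‖wstar - x‖ := norm_sub_rev _ _
        rw [h3] at this
        linarith
      nlinarith [sq_nonneg (‖gx‖ - μ * ‖wstar - x‖), norm_nonneg (wstar - x), norm_nonneg gx]
    -- expand inner products
    have hiv : inner (𝕜 := ℝ) gx v = -(1 / L) * (‖gx‖ ^ 2 - inner (𝕜 := ℝ) gx (e ω)) := by
      rw [hv, inner_neg_right, real_inner_smul_right, inner_sub_right,
        real_inner_self_eq_norm_sq]
      ring
    have hnv : ‖v‖ ^ 2 = (1 / L) ^ 2 * (‖gx‖ ^ 2 - 2 * inner (𝕜 := ℝ) gx (e ω) + ‖e ω‖ ^ 2) := by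
      rw [hv, norm_neg, norm_smul]
      rw [mul_pow]
      congr 1
      · simp [abs_of_pos (by positivity : (0:ℝ) < 1 / L)]
      · rw [← real_inner_self_eq_norm_sq, inner_sub_sub_self, real_inner_self_eq_norm_sq,
          real_inner_self_eq_norm_sq]
        ring_nf
        rw [real_inner_comm]
        ring
    rw [hiv, hnv] at hdesc
    have hL' : L ≠ 0 := ne_of_gt hL
    have hdesc2 : F (w' ω) ≤ F x - 1 / (2 * L) * ‖gx‖ ^ 2 + 1 / (2 * L) * ‖e ω‖ ^ 2 := by
      have : L / 2 * ((1 / L) ^ 2 * (‖gx‖ ^ 2 - 2 * inner (𝕜 := ℝ) gx (e ω) + ‖e ω‖ ^ 2))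
          = 1 / (2 * L) * ‖gx‖ ^ 2 - 1 / L * inner (𝕜 := ℝ) gx (e ω)
            + 1 / (2 * L) * ‖e ω‖ ^ 2 := by
        field_simp
      rw [this] at hdesc
      have h2 : -(1 / L) * (‖gx‖ ^ 2 - inner (𝕜 := ℝ) gx (e ω))
          = - (1 / L) * ‖gx‖ ^ 2 + 1 / L * inner (𝕜 := ℝ) gx (e ω) := by ring
      rw [h2] at hdesc
      have h3 : - (1 / L) * ‖gx‖ ^ 2 + 1 / (2 * L) * ‖gx‖ ^ 2 = - (1 / (2 * L)) * ‖gx‖ ^ 2 := by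
        field_simp; ring
      linarith
    have hfrac : μ / L * (F x - F wstar) ≤ 1 / (2 * L) * ‖gx‖ ^ 2 := by
      rw [div_mul_eq_mul_div, div_le_iff₀ hL, mul_comm (1 / (2 * L)) (‖gx‖ ^ 2),
        mul_assoc]
      have : ‖gx‖ ^ 2 * (1 / (2 * L) * L) = ‖gx‖ ^ 2 / 2 := by field_simp
      rw [this]
      linarith
    linarith
  -- integrate
  set A := ∫ ω, (F (w ω) - F wstar) ∂P with hA
  have hintA : Integrable (fun ω => F (w ω) - F wstar) P := hint_w.sub (integrable_const _)
  have hintA' : Integrable (fun ω => F (w' ω) - F wstar) P := hint_w'.sub (integrable_const _)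
  have hA0 : 0 ≤ A := integral_nonneg fun ω => sub_nonneg.mpr (hmin _)
  have hE0 : 0 ≤ ∫ ω, ‖e ω‖ ^ 2 ∂P := integral_nonneg fun ω => by positivity
  have hintR : Integrable
      (fun ω => (1 - μ / L) * (F (w ω) - F wstar) + 1 / (2 * L) * ‖e ω‖ ^ 2) P :=
    (hintA.const_mul _).add (hint_e.const_mul _)
  have hB : ∫ ω, (F (w' ω) - F wstar) ∂P
      ≤ (1 - μ / L) * A + 1 / (2 * L) * ∫ ω, ‖e ω‖ ^ 2 ∂P := by
    calc ∫ ω, (F (w' ω) - F wstar) ∂P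
        ≤ ∫ ω, ((1 - μ / L) * (F (w ω) - F wstar) + 1 / (2 * L) * ‖e ω‖ ^ 2) ∂P :=
          integral_mono hintA' hintR hpt
      _ = (1 - μ / L) * A + 1 / (2 * L) * ∫ ω, ‖e ω‖ ^ 2 ∂P := by
          rw [integral_add (hintA.const_mul _) (hint_e.const_mul _),
            integral_const_mul, integral_const_mul]
  have hEb : 1 / (2 * L) * (∫ ω, ‖e ω‖ ^ 2 ∂P)
      ≤ 1 / (2 * L) * (2 * β₁ * d + 4 * μ * β₂ * d * A) := by
    apply mul_le_mul_of_nonneg_left herr (by positivity)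
  have hfin : 1 / (2 * L) * (2 * β₁ * d + 4 * μ * β₂ * d * A)
      ≤ ((2 * μ * β₂ / L) * A + β₁ / L) * (2 * d) := by
    have hX : 1 / (2 * L) * (2 * β₁ * d + 4 * μ * β₂ * d * A)
        = (2 * β₁ * d + 4 * μ * β₂ * d * A) / (2 * L) := by ring
    have hY : ((2 * μ * β₂ / L) * A + β₁ / L) * (2 * d)
        = (4 * μ * β₂ * d * A + 2 * β₁ * d) / L := by field_simp; ring
    rw [hX, hY, div_le_div_iff₀ (by positivity) hL]
    nlinarith [mul_nonneg (mul_nonneg hβ₁ hd) hL.le,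
      mul_nonneg (mul_nonneg (mul_nonneg (mul_nonneg hμ.le hβ₂) hd) hA0) hL.le]
  linarith
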